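/- arXiv:2002.09861 — 2 statements merged into one kernel-verified Lean document; each statement's English description precedes it below -/
import Mathlib

section
/- Let X ⊂ P^4 be the cubic threefold defined by f(x_0,...,x_3) + l(x_0,...,x_3)x_4^2 = 0 and let τ be the involution [x_0,...,x_3,x_4] ↦ [x_0,...,x_3,−x_4]. If ℓ ⊂ X is a line preserved by τ, then either ℓ is contained in the cubic surface S = (f = x_4 = 0), or ℓ passes through the point p = [0,0,0,0,1] and is contained in the cone X ∩ T_pX over the curve E = (f = l = x_4 = 0). -/
open MvPolynomial

/-- Let `X ⊂ ℙ⁴` be the cubic threefold `f(x₀,…,x₃) + l(x₀,…,x₃)x₄² = 0`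
and `τ` the involution negating `x₄`.  A line `ℓ ⊂ X` (a 2-dimensional subspace of the
affine cone) preserved by `τ` is either contained in the cubic surface `S = (f = x₄ = 0)`,
or passes through the Eckardt point `p = [0,0,0,0,1]` and lies in the cone
`X ∩ T_pX = (F = l = 0)` over the curve `E = (f = l = x₄ = 0)`. -/
theorem stmt1
    (f l : MvPolynomial (Fin 4) ℂ)
    (hf : f.IsHomogeneous 3) (hl : l.IsHomogeneous 1) (hl0 : l ≠ 0)
    (F : MvPolynomial (Fin 5) ℂ)
    (hF : F = rename Fin.castSucc f + rename Fin.castSucc l * X 4 ^ 2)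
    (hsm : ∀ x : Fin 5 → ℂ, x ≠ 0 → eval x F = 0 → ∃ i, eval x (pderiv i F) ≠ 0)
    (τ : (Fin 5 → ℂ) → (Fin 5 → ℂ)) (hτ : τ = fun x i => if i = 4 then -x i else x i)
    (p : Fin 5 → ℂ) (hp : p = fun i => if i = 4 then 1 else 0)
    (ℓ : Submodule ℂ (Fin 5 → ℂ)) (hdim : Module.finrank ℂ ℓ = 2)
    (hℓX : ∀ x ∈ ℓ, eval x F = 0)
    (hinv : ∀ x ∈ ℓ, τ x ∈ ℓ) :
    -- either ℓ lies on the cubic surface S = (f = x₄ = 0) ...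
    (∀ x ∈ ℓ, x 4 = 0 ∧ eval (x ∘ Fin.castSucc) f = 0) ∨
    -- ... or ℓ passes through the Eckardt point p and lies in the cone X ∩ T_pX over E
    (p ∈ ℓ ∧ ∀ x ∈ ℓ, eval x F = 0 ∧ eval (x ∘ Fin.castSucc) l = 0) := by
  subst hF hτ hp
  have hevalF : ∀ x : Fin 5 → ℂ,
      eval x (rename Fin.castSucc f + rename Fin.castSucc l * X 4 ^ 2)
        = eval (x ∘ Fin.castSucc) f + eval (x ∘ Fin.castSucc) l * x 4 ^ 2 := by
    intro x; simp [eval_rename]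
  have hc4 : ∀ j : Fin 4, (Fin.castSucc j : Fin 5) ≠ 4 := by decide
  by_cases hA : ∀ x ∈ ℓ, x 4 = 0
  · left
    intro x hx
    refine ⟨hA x hx, ?_⟩
    have h0 := hℓX x hx
    rw [hevalF, hA x hx] at h0
    simpa using h0
  · right
    push_neg at hA
    obtain ⟨x0, hx0mem, hx04⟩ := hA
    have hw : (fun i : Fin 5 => if i = 4 then (1 : ℂ) else 0)
        = (2 * x0 4)⁻¹ • (x0 - fun i => if i = 4 then -x0 i else x0 i) := by
      funext i
      by_cases hi : i = 4
      · subst hi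
        simp only [if_pos rfl, ↓reduceIte, Pi.smul_apply, Pi.sub_apply, smul_eq_mul]
        field_simp
        ring
      · simp [hi]
    have hpmem : (fun i : Fin 5 => if i = 4 then (1 : ℂ) else 0) ∈ ℓ := by
      rw [hw]
      exact Submodule.smul_mem _ _ (Submodule.sub_mem _ hx0mem (hinv x0 hx0mem))
    have key : ∀ v ∈ ℓ, v 4 = 0 →
        eval (v ∘ Fin.castSucc) f = 0 ∧ eval (v ∘ Fin.castSucc) l = 0 := by
      intro v hv hv4
      have h1 := hℓX v hv
      rw [hevalF, hv4] at h1
      simp only [ne_eq, OfNat.ofNat_ne_zero, not_false_eq_true, zero_pow, mul_zero,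
        add_zero] at h1
      have hvp : (v + fun i : Fin 5 => if i = 4 then (1 : ℂ) else 0) ∈ ℓ :=
        ℓ.add_mem hv hpmem
      have h2 := hℓX _ hvp
      rw [hevalF] at h2
      have hcomp : ((v + fun i : Fin 5 => if i = 4 then (1 : ℂ) else 0) ∘ Fin.castSucc)
          = v ∘ Fin.castSucc := by
        funext j
        simp [Function.comp, hc4 j]
      have h44 : (v + fun i : Fin 5 => if i = 4 then (1 : ℂ) else 0) 4 = 1 := by
        simp [hv4]
      rw [hcomp, h44, h1] at h2
      refine ⟨h1, ?_⟩
      simpa using h2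
    refine ⟨hpmem, ?_⟩
    intro x hx
    refine ⟨hℓX x hx, ?_⟩
    have hvmem : (2 : ℂ)⁻¹ • (x + fun i => if i = 4 then -x i else x i) ∈ ℓ :=
      Submodule.smul_mem _ _ (ℓ.add_mem hx (hinv x hx))
    have hv4 : ((2 : ℂ)⁻¹ • (x + fun i => if i = 4 then -x i else x i)) 4 = 0 := by
      simp
    have hcomp : (((2 : ℂ)⁻¹ • (x + fun i => if i = 4 then -x i else x i)) ∘ Fin.castSucc)
        = x ∘ Fin.castSucc := by
      funext j
      simp only [Function.comp, Pi.smul_apply, Pi.add_apply, if_neg (hc4 j), smul_eq_mul]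
      ring
    have := (key _ hvmem hv4).2
    rwa [hcomp] at this
end

section
/- Let F = f(x_0,...,x_3) + l(x_0,...,x_3)x_4^2 define a smooth cubic threefold, with Jacobian ideal J_F = (∂F/∂x_0,...,∂F/∂x_4). Then the space of quadrics in J_F^2 not involving x_4, i.e. J_F^2 ∩ Sym²⟨x_0,x_1,x_2,x_3⟩, equals the set of quadrics Σ_{i=0}^{3} a_i (∂f/∂x_i + (∂l/∂x_i)x_4^2) with (a_0,...,a_3) ∈ ℂ^4 satisfying l(a_0,...,a_3) = 0; in particular this space has dimension 3 when the partials of F are linearly independent. -/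
open MvPolynomial

namespace Stmt5Aux

variable {σ : Type*}

lemma degree_add (u v : σ →₀ ℕ) : Finsupp.degree (u + v) = Finsupp.degree u + Finsupp.degree v := by
  simp only [Finsupp.degree_eq_weight_one, map_add]

lemma degree_single (j : σ) (n : ℕ) : Finsupp.degree (Finsupp.single j n) = n := by
  classical
  simp [Finsupp.degree_eq_weight_one, Finsupp.weight_apply, Finsupp.sum_single_index]

lemma degree_one_single (d : σ →₀ ℕ) (hd : Finsupp.degree d = 1) :
    ∃ j, d = Finsupp.single j 1 := by
  classical
  have hne : d.support.Nonempty := by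
    rcases Finset.eq_empty_or_nonempty d.support with h | h
    · exfalso; simp [Finsupp.degree_apply, h] at hd
    · exact h
  have hcard : d.support.card ≤ 1 := by
    calc d.support.card = ∑ _i ∈ d.support, 1 := by simp
    _ ≤ ∑ i ∈ d.support, d i := Finset.sum_le_sum
        (fun i hi => Nat.one_le_iff_ne_zero.mpr (Finsupp.mem_support_iff.mp hi))
    _ = 1 := hd
  obtain ⟨j, hj⟩ := Finset.card_eq_one.mp (le_antisymm hcard (Finset.card_pos.mpr hne))
  have hdj : d j = 1 := by
    have := hd
    rw [Finsupp.degree_apply, hj, Finset.sum_singleton] at this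
    exact this
  refine ⟨j, ?_⟩
  ext x
  by_cases hx : x = j
  · subst hx; simp [hdj]
  · have hxs : x ∉ d.support := by rw [hj]; simp [hx]
    simp [Finsupp.notMem_support_iff.mp hxs, Finsupp.single_apply, Ne.symm hx]

lemma pderiv_isHomogeneous [DecidableEq σ] {p : MvPolynomial σ ℂ} {n : ℕ}
    (hp : p.IsHomogeneous n) (i : σ) : (pderiv i p).IsHomogeneous (n - 1) := by
  rw [p.as_sum, map_sum]
  apply IsHomogeneous.sum
  intro s hs
  rw [pderiv_monomial]
  by_cases h : s i = 0
  · rw [h]; simpa using isHomogeneous_zero σ ℂ (n - 1)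
  · apply isHomogeneous_monomial
    have hdeg : Finsupp.degree s = n := by
      rw [Finsupp.degree_eq_weight_one]
      exact hp (Finsupp.mem_support_iff.mp hs)
    have hle : Finsupp.single i 1 ≤ s :=
      Finsupp.single_le_iff.mpr (Nat.one_le_iff_ne_zero.mpr h)
    have hsum : (s - Finsupp.single i 1) + Finsupp.single i 1 = s := tsub_add_cancel_of_le hle
    have := congrArg Finsupp.degree hsum
    rw [degree_add, degree_single, hdeg] at this
    omega

lemma eq_C_of_isHomogeneous_zero {p : MvPolynomial σ ℂ} (hp : p.IsHomogeneous 0) :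
    p = C (constantCoeff p) := by
  classical
  ext d
  by_cases hd : d = 0
  · subst hd; simp [constantCoeff_eq]
  · rw [hp.coeff_eq_zero (by simp [Ne, Finsupp.degree_eq_zero_iff, hd])]
    rw [coeff_C, if_neg (fun h => hd h.symm)]

lemma sum_smul_pderiv [Fintype σ] [DecidableEq σ] {l : MvPolynomial σ ℂ}
    (hl : l.IsHomogeneous 1) (a : σ → ℂ) :
    ∑ i, a i • pderiv i l = C (eval a l) := by
  have key : ∀ s ∈ l.support,
      (∑ i, a i • pderiv i (monomial s (coeff s l))) = C (eval a (monomial s (coeff s l))) := by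
    intro s hs
    obtain ⟨j, rfl⟩ := degree_one_single s (by
      rw [Finsupp.degree_eq_weight_one]; exact hl (Finsupp.mem_support_iff.mp hs))
    set c := coeff (Finsupp.single j 1) l with hc
    have hsum : (∑ i, a i • pderiv i (monomial (Finsupp.single j 1) c)) = a j • C c := by
      rw [Finset.sum_eq_single j]
      · simp [pderiv_monomial]
      · intro i _ hij
        rw [pderiv_monomial]
        simp [Finsupp.single_apply, Ne.symm hij]
      · simp
    rw [hsum, eval_monomial, Finsupp.prod_single_index (by simp)]
    rw [smul_eq_C_mul, ← C_mul, pow_one, mul_comm]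
  calc ∑ i, a i • pderiv i l
      = ∑ i, a i • pderiv i (∑ s ∈ l.support, monomial s (coeff s l)) := by rw [← l.as_sum]
    _ = ∑ i, ∑ s ∈ l.support, a i • pderiv i (monomial s (coeff s l)) := by
        simp only [map_sum, Finset.smul_sum]
    _ = ∑ s ∈ l.support, ∑ i, a i • pderiv i (monomial s (coeff s l)) := Finset.sum_comm
    _ = ∑ s ∈ l.support, C (eval a (monomial s (coeff s l))) := Finset.sum_congr rfl key
    _ = C (eval a l) := by rw [← map_sum, ← map_sum, ← l.as_sum]

lemma homogeneousComponent_mul_isHomogeneous {n : ℕ} {g : MvPolynomial σ ℂ}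
    (hg : g.IsHomogeneous n) (q : MvPolynomial σ ℂ) :
    homogeneousComponent n (q * g) = C (coeff 0 q) * g := by
  classical
  induction q using MvPolynomial.induction_on' with
  | monomial s a =>
    have hmem : (monomial s a * g) ∈ homogeneousSubmodule σ ℂ (Finsupp.degree s + n) :=
      (isHomogeneous_monomial a rfl).mul hg
    rw [homogeneousComponent_of_mem hmem]
    by_cases hd : Finsupp.degree s = 0
    · rw [if_pos (by omega)]
      have : s = 0 := (Finsupp.degree_eq_zero_iff s).mp hd
      subst this
      simp [monomial_zero', coeff_C]
    · rw [if_neg (by omega)]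
      have : s ≠ 0 := by
        intro h; exact hd (by rw [h]; simp)
      rw [coeff_monomial, if_neg this, map_zero, zero_mul]
  | add p q hp hq =>
    rw [add_mul, map_add, hp, hq, coeff_add, map_add, add_mul]

lemma pderiv_rename_notMem {τ : Type*} [DecidableEq τ] {g : σ → τ} {j : τ}
    (hj : ∀ i, g i ≠ j) (p : MvPolynomial σ ℂ) :
    pderiv j (rename g p) = 0 := by
  induction p using MvPolynomial.induction_on with
  | C a => simp
  | add p q hp hq => simp [hp, hq]
  | mul_X p i hp => rw [map_mul, rename_X, pderiv_mul, hp, pderiv_X_of_ne (hj i)]; simp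

end Stmt5Aux

open Stmt5Aux Module

/-- Let `F = f(x₀,…,x₃) + l(x₀,…,x₃)x₄²` define a smooth cubic threefold,
with Jacobian ideal `J_F = (∂F/∂x₀,…,∂F/∂x₄)`.  The space of quadrics in `J_F²` not
involving `x₄`, i.e. `J_F² ∩ Sym²⟨x₀,…,x₃⟩`, equals the set of quadrics
`Σ_{i=0}^{3} aᵢ·∂F/∂xᵢ = Σ aᵢ(∂f/∂xᵢ + (∂l/∂xᵢ)x₄²)` with `l(a₀,…,a₃) = 0`; in
particular it has dimension 3 when the partials of `F` are linearly independent. -/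
theorem stmt5
    (f l : MvPolynomial (Fin 4) ℂ)
    (hf : f.IsHomogeneous 3) (hl : l.IsHomogeneous 1) (hl0 : l ≠ 0)
    (F : MvPolynomial (Fin 5) ℂ)
    (hF : F = rename Fin.castSucc f + rename Fin.castSucc l * X 4 ^ 2)
    (J : Ideal (MvPolynomial (Fin 5) ℂ))
    (hJ : J = Ideal.span (Set.range fun i => pderiv i F))
    (hind : LinearIndependent ℂ fun i : Fin 5 => pderiv i F)
    (S : Submodule ℂ (MvPolynomial (Fin 5) ℂ))
    -- S = J_F² ∩ Sym²⟨x₀,…,x₃⟩ : degree-2 elements of J_F involving only x₀,…,x₃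
    (hS : S = (J.restrictScalars ℂ ⊓ homogeneousSubmodule (Fin 5) ℂ 2) ⊓
      LinearMap.range (rename (R := ℂ) (Fin.castSucc : Fin 4 → Fin 5)).toLinearMap) :
    (S : Set (MvPolynomial (Fin 5) ℂ))
      = {P | ∃ a : Fin 4 → ℂ, eval a l = 0 ∧ P = ∑ i : Fin 4, a i • pderiv i.castSucc F} ∧
    Module.finrank ℂ S = 3 := by
  classical
  have h45 : (4 : Fin 5) = Fin.last 4 := rfl
  have hcs4 : ∀ i : Fin 4, Fin.castSucc i ≠ (4 : Fin 5) := by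
    intro i; rw [h45]; exact (Fin.castSucc_lt_last i).ne
  have hpd : ∀ i : Fin 4, pderiv (Fin.castSucc i) F
      = rename Fin.castSucc (pderiv i f) + rename Fin.castSucc (pderiv i l) * X 4 ^ 2 := by
    intro i
    rw [hF, map_add, pderiv_mul, pderiv_rename (Fin.castSucc_injective 4),
      pderiv_rename (Fin.castSucc_injective 4), pderiv_pow, pderiv_X_of_ne (Ne.symm (hcs4 i))]
    ring
  have hpd4 : pderiv (4 : Fin 5) F = rename Fin.castSucc l * (2 * X 4) := by
    rw [hF, map_add, pderiv_rename_notMem hcs4, pderiv_mul, pderiv_rename_notMem hcs4,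
      pderiv_pow, pderiv_X_self]
    push_cast
    ring
  have hF3 : F.IsHomogeneous 3 := by
    rw [hF]
    apply IsHomogeneous.add hf.rename_isHomogeneous
    have := (hl.rename_isHomogeneous (f := Fin.castSucc)).mul (isHomogeneous_X_pow (4 : Fin 5) 2)
    simpa using this
  have hg2 : ∀ i : Fin 5, (pderiv i F).IsHomogeneous 2 := fun i => by
    simpa using pderiv_isHomogeneous hF3 i
  have hkey : ∀ a : Fin 4 → ℂ, (∑ i : Fin 4, a i • pderiv (Fin.castSucc i) F)
      = rename Fin.castSucc (∑ i : Fin 4, a i • pderiv i f) + C (eval a l) * X 4 ^ 2 := by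
    intro a
    calc ∑ i : Fin 4, a i • pderiv (Fin.castSucc i) F
        = ∑ i : Fin 4, (a i • rename Fin.castSucc (pderiv i f)
            + a i • rename Fin.castSucc (pderiv i l) * X 4 ^ 2) := by
          refine Finset.sum_congr rfl fun i _ => ?_
          rw [hpd i, smul_add, smul_mul_assoc]
      _ = (∑ i : Fin 4, a i • rename Fin.castSucc (pderiv i f))
            + (∑ i : Fin 4, a i • rename Fin.castSucc (pderiv i l)) * X 4 ^ 2 := by
          rw [Finset.sum_add_distrib, Finset.sum_mul]
      _ = rename Fin.castSucc (∑ i : Fin 4, a i • pderiv i f)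
            + rename Fin.castSucc (∑ i : Fin 4, a i • pderiv i l) * X 4 ^ 2 := by
          simp only [map_sum, map_smul]
      _ = rename Fin.castSucc (∑ i : Fin 4, a i • pderiv i f) + C (eval a l) * X 4 ^ 2 := by
          rw [sum_smul_pderiv hl a, rename_C]
  have hJ2 : ∀ p, p ∈ J → p.IsHomogeneous 2 →
      ∃ c : Fin 5 → ℂ, p = ∑ i : Fin 5, c i • pderiv i F := by
    intro p hp hph
    rw [hJ] at hp
    obtain ⟨c, hc⟩ := Ideal.mem_span_range_iff_exists_fun.mp hp
    refine ⟨fun i => coeff 0 (c i), ?_⟩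
    have h2 := congrArg (homogeneousComponent 2) hc
    rw [map_sum, homogeneousComponent_of_mem ((mem_homogeneousSubmodule _ _).mpr hph),
      if_pos rfl] at h2
    rw [← h2]
    refine Finset.sum_congr rfl fun i _ => ?_
    rw [homogeneousComponent_mul_isHomogeneous (hg2 i) (c i), smul_eq_C_mul]
  have hset : (S : Set (MvPolynomial (Fin 5) ℂ))
      = {P | ∃ a : Fin 4 → ℂ, eval a l = 0 ∧ P = ∑ i : Fin 4, a i • pderiv i.castSucc F} := by
    ext P
    simp only [SetLike.mem_coe, Set.mem_setOf_eq]
    constructor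
    · intro hP
      rw [hS] at hP
      obtain ⟨⟨hPJ, hPh⟩, hPr⟩ := hP
      have hPJ' : P ∈ J := hPJ
      have hPh' : P.IsHomogeneous 2 := hPh
      obtain ⟨c, hc⟩ := hJ2 P hPJ' hPh'
      set a : Fin 4 → ℂ := fun i => c i.castSucc with ha
      have hsplit : P = (rename Fin.castSucc (∑ i : Fin 4, a i • pderiv i f)
          + C (eval a l) * X 4 ^ 2)
          + c (Fin.last 4) • (rename Fin.castSucc l * (2 * X 4)) := by
        rw [hc, Fin.sum_univ_castSucc, hkey, ← h45, hpd4]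
      obtain ⟨q, hq⟩ := hPr
      rw [AlgHom.toLinearMap_apply] at hq
      set v0 : Fin 5 → MvPolynomial (Fin 4) ℂ := Fin.snoc X 0 with hv0
      set v1 : Fin 5 → MvPolynomial (Fin 4) ℂ := Fin.snoc X 1 with hv1
      have hcomp : ∀ (v : Fin 5 → MvPolynomial (Fin 4) ℂ), v ∘ Fin.castSucc = X →
          ∀ w : MvPolynomial (Fin 4) ℂ,
          aeval v (rename (Fin.castSucc : Fin 4 → Fin 5) w) = w := by
        intro v hv w; rw [aeval_rename, hv, aeval_X_left_apply]
      have hv0c : v0 ∘ Fin.castSucc = (X : Fin 4 → MvPolynomial (Fin 4) ℂ) := by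
        rw [hv0]; funext i; simp
      have hv1c : v1 ∘ Fin.castSucc = (X : Fin 4 → MvPolynomial (Fin 4) ℂ) := by
        rw [hv1]; funext i; simp
      have hv04 : v0 (4 : Fin 5) = 0 := by rw [h45]; exact Fin.snoc_last _ _
      have hv14 : v1 (4 : Fin 5) = 1 := by rw [h45]; exact Fin.snoc_last _ _
      have e0 : aeval v0 P = ∑ i : Fin 4, a i • pderiv i f := by
        rw [hsplit]
        simp only [map_add, map_mul, map_smul, map_pow, map_ofNat, aeval_X, aeval_C,
          algebraMap_eq, hv04, hcomp v0 hv0c]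
        simp
      have e1 : aeval v1 P = (∑ i : Fin 4, a i • pderiv i f)
          + C (eval a l) + c (Fin.last 4) • (l * 2) := by
        rw [hsplit]
        simp only [map_add, map_mul, map_smul, map_pow, map_ofNat, aeval_X, aeval_C,
          algebraMap_eq, hv14, hcomp v1 hv1c]
        simp [add_assoc]
      have hqA : q = ∑ i : Fin 4, a i • pderiv i f := by
        have := e0; rw [← hq, hcomp v0 hv0c] at this; exact this
      have hq1 : q = (∑ i : Fin 4, a i • pderiv i f)
          + C (eval a l) + c (Fin.last 4) • (l * 2) := by
        have := e1; rw [← hq, hcomp v1 hv1c] at this; exact this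
      have hzero : C (eval a l) + C (c (Fin.last 4)) * (l * 2) = 0 := by
        have h := hqA.symm.trans hq1
        rw [smul_eq_C_mul] at h
        linear_combination -h
      have ht : eval a l = 0 := by
        have hl00 : constantCoeff l = 0 := hl.coeff_eq_zero (by simp)
        have h0 := congrArg constantCoeff hzero
        simpa [hl00] using h0
      have hc4 : c (Fin.last 4) = 0 := by
        rw [ht, map_zero, zero_add, mul_eq_zero] at hzero
        rcases hzero with h | h
        · simpa using h
        · exfalso
          apply hl0
          rcases mul_eq_zero.mp h with h2 | h2
          · exact h2
          · exact absurd h2 (by norm_num)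
      refine ⟨a, ht, ?_⟩
      rw [hc, Fin.sum_univ_castSucc, hc4, zero_smul, add_zero]
    · rintro ⟨a, ha0, rfl⟩
      rw [hS]
      refine Submodule.mem_inf.mpr ⟨Submodule.mem_inf.mpr ⟨?_, ?_⟩, ?_⟩
      · refine Submodule.sum_mem _ fun i _ => Submodule.smul_mem _ _ ?_
        rw [Submodule.restrictScalars_mem, hJ]
        exact Ideal.subset_span ⟨i.castSucc, rfl⟩
      · exact Submodule.sum_mem _ fun i _ => Submodule.smul_mem _ _
          ((mem_homogeneousSubmodule _ _).mpr (hg2 _))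
      · refine ⟨∑ i : Fin 4, a i • pderiv i f, ?_⟩
        rw [AlgHom.toLinearMap_apply, ← add_zero (rename Fin.castSucc _), hkey a, ha0]
        simp
  refine ⟨hset, ?_⟩
  have hKI : LinearIndependent ℂ (fun i : Fin 4 => pderiv (Fin.castSucc i) F) :=
    hind.comp Fin.castSucc (Fin.castSucc_injective 4)
  set L : (Fin 4 → ℂ) →ₗ[ℂ] MvPolynomial (Fin 5) ℂ :=
    Fintype.linearCombination ℂ (fun i : Fin 4 => pderiv (Fin.castSucc i) F) with hL
  have hLa : ∀ a : Fin 4 → ℂ, L a = ∑ i : Fin 4, a i • pderiv (Fin.castSucc i) F :=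
    fun a => rfl
  have hLinj : Function.Injective L := by
    rw [← LinearMap.ker_eq_bot]
    refine (Submodule.eq_bot_iff _).mpr fun a ha => ?_
    rw [LinearMap.mem_ker, hLa] at ha
    funext i
    exact Fintype.linearIndependent_iff.mp hKI a ha i
  set b : Fin 4 → ℂ := fun i => constantCoeff (pderiv i l) with hb
  have hpl : ∀ i, pderiv i l = C (b i) := fun i =>
    eq_C_of_isHomogeneous_zero (by simpa using pderiv_isHomogeneous hl i)
  have heval : ∀ a : Fin 4 → ℂ, eval a l = ∑ i, a i * b i := by
    intro a
    apply C_injective (Fin 4) ℂ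
    rw [← sum_smul_pderiv hl a, map_sum]
    exact Finset.sum_congr rfl fun i _ => by rw [hpl i, smul_eq_C_mul, ← C_mul]
  set φ : (Fin 4 → ℂ) →ₗ[ℂ] ℂ := Fintype.linearCombination ℂ b with hφ
  have hφa : ∀ a, φ a = eval a l := by
    intro a
    rw [heval]
    simp [hφ, Fintype.linearCombination_apply, smul_eq_mul]
  have hbj : ∃ j, b j ≠ 0 := by
    by_contra h
    push_neg at h
    apply hl0
    apply MvPolynomial.funext
    intro x
    rw [heval]
    simp [h]
  have hφsurj : Function.Surjective φ := by
    obtain ⟨j, hj⟩ := hbj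
    intro z
    refine ⟨Pi.single j (z / b j), ?_⟩
    rw [hφ, Fintype.linearCombination_apply_single, smul_eq_mul, div_mul_cancel₀ z hj]
  have hrange : finrank ℂ (LinearMap.range φ) = 1 := by
    rw [LinearMap.range_eq_top.mpr hφsurj, finrank_top, finrank_self]
  have hker : finrank ℂ (LinearMap.ker φ) = 3 := by
    have h4 := LinearMap.finrank_range_add_finrank_ker φ
    rw [hrange] at h4
    have hdim : finrank ℂ (Fin 4 → ℂ) = 4 := by simp
    omega
  have hSmap : S = Submodule.map L (LinearMap.ker φ) := by
    ext P
    constructor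
    · intro hP
      have : P ∈ (S : Set (MvPolynomial (Fin 5) ℂ)) := hP
      rw [hset] at this
      obtain ⟨a, ha0, rfl⟩ := this
      exact Submodule.mem_map.mpr ⟨a, by rw [LinearMap.mem_ker, hφa]; exact ha0, (hLa a).symm ▸ rfl⟩
    · intro hP
      obtain ⟨a, haker, rfl⟩ := Submodule.mem_map.mp hP
      show L a ∈ (S : Set (MvPolynomial (Fin 5) ℂ))
      rw [hset]
      exact ⟨a, by rw [← hφa]; exact haker, hLa a⟩
  rw [hSmap, ← LinearEquiv.finrank_eq (Submodule.equivMapOfInjective L hLinj (LinearMap.ker φ))]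
  exact hker
end
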